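/- Let n ≥ 1, G > 0, and 0 < η ≤ 1/2. Let v_1, …, v_T ∈ ℝ^n with ‖v_t‖_∞ ≤ G for all t. Define weights by w^1_i = 1 and w^{t+1}_i = w^t_i · (1 − η v_t(i)/G) for all i ∈ [n], and set x_t = w^t / Σ_{i=1}^n w^t_i ∈ S_n. Then for every x* ∈ S_n: Σ_{t=1}^T ⟨x_t, v_t⟩ ≤ Σ_{t=1}^T ⟨x*, v_t⟩ + η Σ_{t=1}^T ⟨x*, |v_t|⟩ + (G log n)/η, where |v_t| denotes the vector whose i-th coordinate is |v_t(i)|. -/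

import Mathlib

theorem mw_aux_log (z : ℝ) (hz : |z| ≤ 1/2) : -z - z^2 ≤ Real.log (1 - z) := by
  have h1 : |z| < 1 := lt_of_le_of_lt hz (by norm_num)
  have hb := Real.abs_log_sub_add_sum_range_le h1 4
  have hs : (∑ i ∈ Finset.range 4, z ^ (i+1) / (i+1)) = z + z^2/2 + z^3/3 + z^4/4 := by
    simp [Finset.sum_range_succ]
    ring
  rw [hs] at hb
  norm_num at hb
  have h2 : (1:ℝ)/2 ≤ 1 - |z| := by linarith
  have h3 : |z|^5 / (1 - |z|) ≤ 2 * |z|^5 := by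
    rw [div_le_iff₀ (by linarith)]
    nlinarith [pow_nonneg (abs_nonneg z) 5]
  have h4 := (abs_le.mp hb).1
  rcases abs_cases z with ⟨he, hz0⟩ | ⟨he, hz0⟩ <;> rw [he] at h3 h4 hz
  · have hh : (0:ℝ) ≤ 1/2 - z := by linarith
    nlinarith [mul_nonneg hz0 hh, mul_nonneg (mul_nonneg hz0 hz0) hh,
      mul_nonneg (mul_nonneg (mul_nonneg hz0 hz0) hz0) hh,
      mul_nonneg (mul_nonneg (mul_nonneg (mul_nonneg hz0 hz0) hz0) hz0) hh]
  · have hz0' : (0:ℝ) ≤ -z := by linarith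
    have hh : (0:ℝ) ≤ 1/2 + z := by linarith
    nlinarith [mul_nonneg hz0' hh, mul_nonneg (mul_nonneg hz0' hz0') hh,
      mul_nonneg (mul_nonneg (mul_nonneg hz0' hz0') hz0') hh,
      mul_nonneg (mul_nonneg (mul_nonneg (mul_nonneg hz0' hz0') hz0') hz0') hh]

theorem multiplicativeWeights_core {n : ℕ} (hn : 1 ≤ n) (T : ℕ)
    (G η : ℝ) (hG : 0 < G) (hη₀ : 0 < η) (hη : η ≤ 1 / 2)
    (v : ℕ → Fin n → ℝ) (hv : ∀ t, t < T → ∀ i, |v t i| ≤ G)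
    (w : ℕ → Fin n → ℝ) (hw0 : ∀ i, w 0 i = 1)
    (hw : ∀ t, t < T → ∀ i, w (t + 1) i = w t i * (1 - η * v t i / G))
    (x : ℕ → Fin n → ℝ) (hx : ∀ t i, x t i = w t i / ∑ k, w t k) :
    ∀ xstar ∈ stdSimplex ℝ (Fin n),
      ∑ t ∈ Finset.range T, ∑ i, x t i * v t i ≤
        (∑ t ∈ Finset.range T, ∑ i, xstar i * v t i) +
          η * ∑ t ∈ Finset.range T, ∑ i, xstar i * |v t i| +
          G * Real.log n / η := by
  intro xstar hxs
  obtain ⟨hxs0, hxs1⟩ := hxs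
  haveI : Nonempty (Fin n) := ⟨⟨0, hn⟩⟩
  -- factor bounds
  have hzb : ∀ t, t < T → ∀ i, |η * v t i / G| ≤ η := by
    intro t ht i
    rw [abs_div, abs_mul, abs_of_pos hη₀, abs_of_pos hG, div_le_iff₀ hG]
    nlinarith [hv t ht i, abs_nonneg (v t i)]
  have hfac : ∀ t, t < T → ∀ i, (1:ℝ)/2 ≤ 1 - η * v t i / G := by
    intro t ht i
    have h1 := (abs_le.mp (hzb t ht i)).2
    linarith
  -- positivity of weights
  have hpos : ∀ t, t ≤ T → ∀ i, 0 < w t i := by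
    intro t
    induction t with
    | zero => intro _ i; rw [hw0]; norm_num
    | succ t ih =>
      intro ht i
      rw [hw t (by omega) i]
      have h1 := hfac t (by omega) i
      have h2 := ih (by omega) i
      nlinarith
  have hWpos : ∀ t, t ≤ T → 0 < ∑ i, w t i := by
    intro t ht
    exact Finset.sum_pos (fun i _ => hpos t ht i) Finset.univ_nonempty
  -- plays are a prob. distribution
  have hxsum : ∀ t, t ≤ T → ∑ i, x t i = 1 := by
    intro t ht
    have hW := hWpos t ht
    rw [Finset.sum_congr rfl (fun i _ => hx t i), ← Finset.sum_div]
    field_simp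
  have hxnn : ∀ t, t ≤ T → ∀ i, 0 ≤ x t i := by
    intro t ht i
    rw [hx]
    exact div_nonneg (hpos t ht i).le (hWpos t ht).le
  -- payoff bound
  have hpb : ∀ t, t < T → ∑ i, x t i * v t i ≤ G := by
    intro t ht
    calc ∑ i, x t i * v t i ≤ ∑ i, x t i * G := by
          apply Finset.sum_le_sum
          intro i _
          exact mul_le_mul_of_nonneg_left (le_trans (le_abs_self _) (hv t ht i)) (hxnn t ht.le i)
      _ = G := by rw [← Finset.sum_mul, hxsum t ht.le, one_mul]
  -- recurrence for total weight
  have hWrec : ∀ t, t < T →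
      (∑ i, w (t+1) i) = (∑ i, w t i) * (1 - η * (∑ i, x t i * v t i) / G) := by
    intro t ht
    have hW := hWpos t ht.le
    have hp : (∑ i, w t i) * (∑ i, x t i * v t i) = ∑ i, w t i * v t i := by
      rw [Finset.mul_sum]
      apply Finset.sum_congr rfl
      intro i _
      rw [hx]
      field_simp
    have h1 : (∑ i, w (t+1) i) = ∑ i, (w t i - η * (w t i * v t i) / G) := by
      apply Finset.sum_congr rfl
      intro i _
      rw [hw t ht i]
      ring
    rw [h1, Finset.sum_sub_distrib]
    rw [mul_sub, mul_one]
    congr 1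
    rw [← Finset.sum_div, ← Finset.mul_sum, ← hp]
    ring
  -- upper bound on log of total weight
  have hupper : ∀ t, t ≤ T →
      Real.log (∑ i, w t i) ≤ Real.log n - (η/G) * ∑ s ∈ Finset.range t, ∑ i, x s i * v s i := by
    intro t
    induction t with
    | zero => simp [hw0]
    | succ t ih =>
      intro ht
      have ht' : t < T := by omega
      have hW := hWpos t (by omega)
      have hfac2 : 0 < 1 - η * (∑ i, x t i * v t i) / G := by
        have h1 : η * (∑ i, x t i * v t i) / G ≤ η := by
          rw [div_le_iff₀ hG]
          nlinarith [hpb t ht']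
        linarith
      rw [hWrec t ht', Real.log_mul (ne_of_gt hW) (ne_of_gt hfac2), Finset.sum_range_succ]
      have hlog : Real.log (1 - η * (∑ i, x t i * v t i) / G) ≤ -(η * (∑ i, x t i * v t i) / G) := by
        have := Real.log_le_sub_one_of_pos hfac2
        linarith
      have hih := ih (by omega)
      have : (η/G) * (∑ i, x t i * v t i) = η * (∑ i, x t i * v t i) / G := by ring
      linarith [this ▸ hlog]
  -- lower bound on log of each weight
  have hlow : ∀ t, t ≤ T → ∀ i,
      ∑ s ∈ Finset.range t, (-(η * v s i / G) - η^2 * |v s i| / G) ≤ Real.log (w t i) := by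
    intro t
    induction t with
    | zero => intro _ i; simp [hw0]
    | succ t ih =>
      intro ht i
      have ht' : t < T := by omega
      rw [hw t ht' i, Real.log_mul (ne_of_gt (hpos t (by omega) i))
        (by have := hfac t ht' i; linarith), Finset.sum_range_succ]
      have hz : |η * v t i / G| ≤ 1/2 := le_trans (hzb t ht' i) hη
      have hlg := mw_aux_log (η * v t i / G) hz
      have hz2 : (η * v t i / G)^2 ≤ η^2 * |v t i| / G := by
        rw [div_pow, div_le_div_iff₀ (by positivity) hG]
        have h1 := hv t ht' i
        have h2 : (v t i)^2 ≤ |v t i| * G := by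
          nlinarith [sq_abs (v t i), abs_nonneg (v t i)]
        calc (η * v t i)^2 * G = η^2 * (v t i)^2 * G := by ring
          _ ≤ η^2 * (|v t i| * G) * G := by
              nlinarith [mul_le_mul_of_nonneg_left h2 (by positivity : (0:ℝ) ≤ η^2 * G)]
          _ = η^2 * |v t i| * G^2 := by ring
      linarith [ih (by omega) i]
  -- combine: weighted lower bound vs log of total weight
  have hcomb : ∑ i, xstar i * Real.log (w T i) ≤ Real.log (∑ i, w T i) := by
    calc ∑ i, xstar i * Real.log (w T i) ≤ ∑ i, xstar i * Real.log (∑ k, w T k) := by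
          apply Finset.sum_le_sum
          intro i _
          refine mul_le_mul_of_nonneg_left ?_ (hxs0 i)
          exact Real.log_le_log (hpos T le_rfl i)
            (Finset.single_le_sum (fun k _ => (hpos T le_rfl k).le) (Finset.mem_univ i))
      _ = Real.log (∑ k, w T k) := by rw [← Finset.sum_mul, hxs1, one_mul]
  have hlow2 : ∑ t ∈ Finset.range T, ∑ i, xstar i * (-(η * v t i / G) - η^2 * |v t i| / G)
      ≤ ∑ i, xstar i * Real.log (w T i) := by
    rw [Finset.sum_comm]
    apply Finset.sum_le_sum
    intro i _
    rw [← Finset.mul_sum]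
    exact mul_le_mul_of_nonneg_left (hlow T le_rfl i) (hxs0 i)
  -- reshape
  have hreshape : ∑ t ∈ Finset.range T, ∑ i, xstar i * (-(η * v t i / G) - η^2 * |v t i| / G)
      = -((η/G) * ∑ t ∈ Finset.range T, ∑ i, xstar i * v t i)
        - (η^2/G) * ∑ t ∈ Finset.range T, ∑ i, xstar i * |v t i| := by
    rw [Finset.mul_sum, Finset.mul_sum, ← Finset.sum_neg_distrib, ← Finset.sum_sub_distrib]
    apply Finset.sum_congr rfl
    intro t _
    rw [Finset.mul_sum, Finset.mul_sum, ← Finset.sum_neg_distrib, ← Finset.sum_sub_distrib]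
    apply Finset.sum_congr rfl
    intro i _
    ring
  -- assemble
  have hU := hupper T le_rfl
  rw [hreshape] at hlow2
  set A := ∑ t ∈ Finset.range T, ∑ i, x t i * v t i with hA
  set B := ∑ t ∈ Finset.range T, ∑ i, xstar i * v t i with hB
  set C := ∑ t ∈ Finset.range T, ∑ i, xstar i * |v t i| with hC
  have hkey : (η/G) * A ≤ (η/G) * B + (η^2/G) * C + Real.log n := by linarith
  rw [← mul_le_mul_iff_of_pos_left hη₀]
  have hexp : η * (B + η * C + G * Real.log n / η) = η * B + η^2 * C + G * Real.log n := by
    field_simp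
  rw [hexp]
  have h7 := mul_le_mul_of_nonneg_left hkey hG.le
  have hG' : G ≠ 0 := ne_of_gt hG
  calc η * A = G * ((η/G) * A) := by field_simp
    _ ≤ G * ((η/G) * B + (η^2/G) * C + Real.log n) := h7
    _ = η * B + η^2 * C + G * Real.log n := by field_simp
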